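/- Let d ≥ 3, R > 0, 1/2 ≤ η ≤ 1 and 0 ≤ M ≤ ηR/2, and let U = {z ∈ ℝ^d : |z_1 - 10R| ≤ R, z_2²+⋯+z_d² ≤ (ηR)²}. Then there exists C > 0 depending only on d such that for every point x ∈ ℝ^d of the form x = (x_1, M, 0, …, 0) with |x_1| ≤ R, |∫_U (z_2 - M)/|z-x|^d dz| ≤ C·M. -/

import Mathlib

open MeasureTheory

/-- The distant cylinder (``attracting galaxy``)
`U = {z ∈ ℝ^d : |z_1 - 10R| ≤ R, z_2²+⋯+z_d² ≤ (ηR)²}`. -/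
def galaxyCylinder (d : ℕ) (h0 : 0 < d) (R η : ℝ) : Set (EuclideanSpace ℝ (Fin d)) :=
  {z | |z ⟨0, h0⟩ - 10 * R| ≤ R ∧
    ∑ i ∈ Finset.univ.filter (fun i : Fin d => i ≠ ⟨0, h0⟩), (z i) ^ 2 ≤ (η * R) ^ 2}

/-- The point `(x_1, M, 0, …, 0) ∈ ℝ^d`. -/
noncomputable def sidePoint (d : ℕ) (h0 : 0 < d) (h1 : 1 < d) (x1 M : ℝ) :
    EuclideanSpace ℝ (Fin d) :=
  WithLp.toLp 2 (fun i : Fin d => if i = ⟨0, h0⟩ then x1 else if i = ⟨1, h1⟩ then M else 0)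

private theorem my_abs_pow_sub_pow {a b K : ℝ} (n : ℕ) (ha : 0 ≤ a) (hb : 0 ≤ b) (haK : a ≤ K)
    (hbK : b ≤ K) : |a ^ n - b ^ n| ≤ n * K ^ (n - 1) * |a - b| := by
  have hK : 0 ≤ K := ha.trans haK
  rw [← geom_sum₂_mul, abs_mul]
  gcongr
  calc |∑ i ∈ Finset.range n, a ^ i * b ^ (n - 1 - i)|
      ≤ ∑ i ∈ Finset.range n, |a ^ i * b ^ (n - 1 - i)| := Finset.abs_sum_le_sum_abs _ _
    _ ≤ ∑ _i ∈ Finset.range n, K ^ (n - 1) := by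
        refine Finset.sum_le_sum fun i hi => ?_
        rw [abs_mul, abs_pow, abs_pow, abs_of_nonneg ha, abs_of_nonneg hb]
        calc a ^ i * b ^ (n - 1 - i)
            ≤ K ^ i * K ^ (n - 1 - i) :=
              mul_le_mul (pow_le_pow_left₀ ha haK i) (pow_le_pow_left₀ hb hbK _)
                (pow_nonneg hb _) (pow_nonneg hK i)
          _ = K ^ (n - 1) := by
              rw [← pow_add]; congr 1; simp at hi; omega
    _ = n * K ^ (n - 1) := by simp [Finset.sum_const, mul_comm]

private theorem my_abs_coord_le_norm {d : ℕ} (w : EuclideanSpace ℝ (Fin d)) (i : Fin d) :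
    |w i| ≤ ‖w‖ := by
  rw [EuclideanSpace.norm_eq, ← Real.sqrt_sq_eq_abs]
  apply Real.sqrt_le_sqrt
  have := Finset.single_le_sum (f := fun j => ‖w j‖ ^ 2) (fun j _ => sq_nonneg _)
    (Finset.mem_univ i)
  simpa [Real.norm_eq_abs, sq_abs] using this

set_option maxHeartbeats 1000000 in
/-- Let `d ≥ 3`, `R > 0`, `1/2 ≤ η ≤ 1` and `0 ≤ M ≤ ηR/2`. There exists
`C > 0` depending only on `d` such that for every `x = (x_1, M, 0, …, 0)` with `|x_1| ≤ R`,
`|∫_U (z_2 - M)/|z-x|^d dz| ≤ C·M`. -/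
theorem galaxy_radial_pull_bound (d : ℕ) (hd : 3 ≤ d) :
    ∃ C : ℝ, 0 < C ∧
      ∀ R η M : ℝ, 0 < R → 1 / 2 ≤ η → η ≤ 1 → 0 ≤ M → M ≤ η * R / 2 →
      ∀ x1 : ℝ, |x1| ≤ R →
        |∫ z in galaxyCylinder d (by omega) R η,
            (z ⟨1, by omega⟩ - M) / ‖z - sidePoint d (by omega) (by omega) x1 M‖ ^ d| ≤
          C * M := by
  classical
  have h0 : 0 < d := by omega
  have h1 : 1 < d := by omega
  set i0 : Fin d := ⟨0, h0⟩ with hi0def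
  set i1 : Fin d := ⟨1, h1⟩ with hi1def
  have hi01 : i1 ≠ i0 := by simp [hi0def, hi1def, Fin.ext_iff]
  set κ : ℝ := (volume (Metric.closedBall (0 : EuclideanSpace ℝ (Fin d)) 1)).toReal with hκdef
  have hκ0 : 0 ≤ κ := ENNReal.toReal_nonneg
  set K : ℝ := (2 * d * 14 ^ (d - 1) + 2 * 14 ^ d) / (8 ^ d * 8 ^ d) with hKdef
  have hK0 : 0 ≤ K := by positivity
  have hCpos : (0:ℝ) < 2 ^ d * K * κ + 1 := by
    have h2 : (0:ℝ) ≤ 2 ^ d * K * κ :=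
      mul_nonneg (mul_nonneg (by positivity) hK0) hκ0
    linarith
  refine ⟨2 ^ d * K * κ + 1, hCpos, ?_⟩
  intro R η M hR hη1 hη2 hM0 hM1 x1 hx1
  have hηR : η * R ≤ R := by nlinarith
  have hηR0 : 0 ≤ η * R := by nlinarith
  have hMR : M ≤ R / 2 := by nlinarith
  set U : Set (EuclideanSpace ℝ (Fin d)) := galaxyCylinder d h0 R η with hUdef
  set x : EuclideanSpace ℝ (Fin d) := sidePoint d h0 h1 x1 M with hxdef
  set f : EuclideanSpace ℝ (Fin d) → ℝ := fun z => (z i1 - M) / ‖z - x‖ ^ d with hfdef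
  have hfz : ∀ z, f z = (z i1 - M) / ‖z - x‖ ^ d := fun z => rfl
  show |∫ z in U, f z| ≤ (2 ^ d * K * κ + 1) * M
  -- the reflection in the second coordinate
  set σ : EuclideanSpace ℝ (Fin d) ≃ₗᵢ[ℝ] EuclideanSpace ℝ (Fin d) :=
    .piLpCongrRight 2 (fun i => if i = i1 then .neg ℝ else .refl ℝ ℝ) with hσdef
  have hσapp : ∀ (z : EuclideanSpace ℝ (Fin d)) i,
      σ z i = if i = i1 then -(z i) else z i := by
    intro z i
    have h : σ z i
        = (if i = i1 then LinearIsometryEquiv.neg ℝ else LinearIsometryEquiv.refl ℝ ℝ) (z i) :=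
      rfl
    rw [h]
    split <;> simp
  have hσσ : ∀ w : EuclideanSpace ℝ (Fin d), σ (σ w) = w := by
    intro w
    ext i
    rw [hσapp (σ w) i, hσapp w i]
    by_cases h : i = i1 <;> simp [h]
  set y : EuclideanSpace ℝ (Fin d) := σ x with hydef
  -- coordinates of x and y
  have hxapp : ∀ i, x i = if i = i0 then x1 else if i = i1 then M else 0 := fun i => rfl
  have hxi0 : x i0 = x1 := by rw [hxapp]; simp
  have hxi1 : x i1 = M := by rw [hxapp]; simp [hi01]
  have hyi0 : y i0 = x1 := by rw [hydef, hσapp, if_neg (Ne.symm hi01), hxi0]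
  -- sum splitting
  have hsplit : ∀ g : Fin d → ℝ, ∑ i, g i
      = g i0 + ∑ i ∈ Finset.univ.filter (fun i => i ≠ i0), g i := by
    intro g
    rw [← Finset.sum_filter_add_sum_filter_not Finset.univ (fun i => i = i0) g]
    congr 1
    rw [Finset.filter_eq', if_pos (Finset.mem_univ _), Finset.sum_singleton]
  have himem : i1 ∈ Finset.univ.filter (fun i : Fin d => i ≠ i0) := by
    simp [hi01]
  have hnormeq : ∀ w : EuclideanSpace ℝ (Fin d), ‖w‖ = Real.sqrt (∑ i, (w i) ^ 2) := by
    intro w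
    rw [EuclideanSpace.norm_eq]
    simp [Real.norm_eq_abs, sq_abs]
  -- norm of x and y
  have hxsingle : x = EuclideanSpace.single i0 x1 + EuclideanSpace.single i1 M := by
    ext i
    rw [show (EuclideanSpace.single i0 x1 + EuclideanSpace.single i1 M) i
        = EuclideanSpace.single i0 x1 i + EuclideanSpace.single i1 M i from rfl,
      EuclideanSpace.single_apply, EuclideanSpace.single_apply, hxapp]
    by_cases h : i = i0
    · simp [h, hi01, Ne.symm hi01]
    · by_cases h' : i = i1 <;> simp [h, h', hi01]
  have hxnorm : ‖x‖ ≤ 2 * R := by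
    rw [hxsingle]
    calc ‖EuclideanSpace.single i0 x1 + EuclideanSpace.single i1 M‖
        ≤ ‖EuclideanSpace.single i0 x1‖ + ‖EuclideanSpace.single i1 M‖ := norm_add_le _ _
      _ = |x1| + |M| := by
          rw [EuclideanSpace.norm_single, EuclideanSpace.norm_single, Real.norm_eq_abs,
            Real.norm_eq_abs]
      _ ≤ 2 * R := by rw [abs_of_nonneg hM0]; linarith
  have hynorm : ‖y‖ ≤ 2 * R := by rw [hydef, σ.norm_map]; exact hxnorm
  have hyx : y - x = EuclideanSpace.single i1 (-(2 * M)) := by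
    ext i
    rw [show (y - x) i = y i - x i from rfl, EuclideanSpace.single_apply, hydef, hσapp]
    by_cases h : i = i1
    · subst h; simp [hxi1]; ring
    · simp [h]
  have hyxnorm : ‖y - x‖ = 2 * M := by
    rw [hyx, EuclideanSpace.norm_single, Real.norm_eq_abs, abs_neg,
      abs_of_nonneg (by linarith)]
  -- pointwise facts on U
  have hRd : (0:ℝ) < R ^ d := by positivity
  have hfacts : ∀ z ∈ U, 8 * R ≤ ‖z - x‖ ∧ ‖z - x‖ ≤ 14 * R ∧ 8 * R ≤ ‖z - y‖ ∧
      ‖z - y‖ ≤ 14 * R ∧ |z i1| ≤ R ∧ |‖z - x‖ - ‖z - y‖| ≤ 2 * M := by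
    intro z hz
    obtain ⟨hz1, hz2⟩ := hz
    rw [abs_le] at hz1
    have hzi0a : 9 * R ≤ z i0 := by linarith [hz1.1]
    have hzi0b : z i0 ≤ 11 * R := by linarith [hz1.2]
    have hx1' := abs_le.mp hx1
    have hzi1 : |z i1| ≤ R := by
      have hle : (z i1) ^ 2 ≤ (η * R) ^ 2 :=
        le_trans (Finset.single_le_sum (f := fun j => (z j) ^ 2)
          (fun j _ => sq_nonneg _) himem) hz2
      rw [← Real.sqrt_sq_eq_abs]
      calc Real.sqrt ((z i1) ^ 2) ≤ Real.sqrt ((η * R) ^ 2) := Real.sqrt_le_sqrt hle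
        _ = |η * R| := Real.sqrt_sq_eq_abs _
        _ ≤ R := by rw [abs_of_nonneg hηR0]; exact hηR
    have hznorm : ‖z‖ ≤ 12 * R := by
      rw [hnormeq z]
      have hsum : ∑ i, (z i) ^ 2 ≤ (12 * R) ^ 2 := by
        rw [hsplit (fun i => (z i) ^ 2)]
        have h2 : ∑ i ∈ Finset.univ.filter (fun i => i ≠ i0), (z i) ^ 2 ≤ (η * R) ^ 2 := hz2
        nlinarith
      calc Real.sqrt (∑ i, (z i) ^ 2) ≤ Real.sqrt ((12 * R) ^ 2) := Real.sqrt_le_sqrt hsum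
        _ = 12 * R := by rw [Real.sqrt_sq (by linarith)]
    have hA8 : 8 * R ≤ ‖z - x‖ := by
      calc (8 : ℝ) * R ≤ z i0 - x1 := by linarith [hx1'.2]
        _ ≤ |z i0 - x1| := le_abs_self _
        _ = |(z - x) i0| := by rw [show (z - x) i0 = z i0 - x i0 from rfl, hxi0]
        _ ≤ ‖z - x‖ := my_abs_coord_le_norm _ _
    have hB8 : 8 * R ≤ ‖z - y‖ := by
      calc (8 : ℝ) * R ≤ z i0 - x1 := by linarith [hx1'.2]
        _ ≤ |z i0 - x1| := le_abs_self _
        _ = |(z - y) i0| := by rw [show (z - y) i0 = z i0 - y i0 from rfl, hyi0]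
        _ ≤ ‖z - y‖ := my_abs_coord_le_norm _ _
    have hA14 : ‖z - x‖ ≤ 14 * R := by
      calc ‖z - x‖ ≤ ‖z‖ + ‖x‖ := norm_sub_le _ _
        _ ≤ 14 * R := by linarith
    have hB14 : ‖z - y‖ ≤ 14 * R := by
      calc ‖z - y‖ ≤ ‖z‖ + ‖y‖ := norm_sub_le _ _
        _ ≤ 14 * R := by linarith
    have hABdiff : |‖z - x‖ - ‖z - y‖| ≤ 2 * M := by
      calc |‖z - x‖ - ‖z - y‖| ≤ ‖(z - x) - (z - y)‖ := abs_norm_sub_norm_le _ _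
        _ = ‖y - x‖ := by congr 1; abel
        _ = 2 * M := hyxnorm
    exact ⟨hA8, hA14, hB8, hB14, hzi1, hABdiff⟩
  -- measurability
  have hfmeas : Measurable f := by
    apply Measurable.div
    · exact ((EuclideanSpace.proj i1 :
        EuclideanSpace ℝ (Fin d) →L[ℝ] ℝ).continuous.measurable).sub measurable_const
    · exact (((continuous_id.sub continuous_const).norm).measurable).pow_const d
  have hUmeas : MeasurableSet U := by
    have hUeq : U = {z : EuclideanSpace ℝ (Fin d) | |z i0 - 10 * R| ≤ R} ∩
        {z : EuclideanSpace ℝ (Fin d) |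
          ∑ i ∈ Finset.univ.filter (fun i : Fin d => i ≠ i0), (z i) ^ 2 ≤ (η * R) ^ 2} := rfl
    rw [hUeq]
    apply MeasurableSet.inter
    · exact measurableSet_le
        ((((EuclideanSpace.proj i0 :
          EuclideanSpace ℝ (Fin d) →L[ℝ] ℝ).continuous.measurable).sub
          measurable_const).abs) measurable_const
    · exact measurableSet_le
        (Finset.measurable_sum _ fun i _ =>
          ((EuclideanSpace.proj i :
            EuclideanSpace ℝ (Fin d) →L[ℝ] ℝ).continuous.measurable).pow_const 2)
        measurable_const
  -- volume bound
  have hsub : U ⊆ Metric.closedBall (EuclideanSpace.single i0 (10 * R)) (2 * R) := by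
    intro z hz
    obtain ⟨hz1, hz2⟩ := hz
    rw [Metric.mem_closedBall, dist_eq_norm, hnormeq]
    set c : EuclideanSpace ℝ (Fin d) := EuclideanSpace.single i0 (10 * R) with hcdef
    have hsum : ∑ i, ((z - c) i) ^ 2 = (z i0 - 10 * R) ^ 2
        + ∑ i ∈ Finset.univ.filter (fun i => i ≠ i0), (z i) ^ 2 := by
      rw [hsplit (fun i => ((z - c) i) ^ 2)]
      beta_reduce
      congr 1
      refine Finset.sum_congr rfl fun i hi => ?_
      simp only [Finset.mem_filter, Finset.mem_univ, true_and] at hi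
      rw [show (z - c) i = z i - c i from rfl, hcdef, EuclideanSpace.single_apply,
        if_neg hi, sub_zero]
    have hb1 : (z i0 - 10 * R) ^ 2 ≤ R ^ 2 := by
      rw [← sq_abs]
      exact pow_le_pow_left₀ (abs_nonneg _) hz1 2
    have hball : ∑ i, ((z - c) i) ^ 2 ≤ (2 * R) ^ 2 := by rw [hsum]; nlinarith
    calc Real.sqrt (∑ i, ((z - c) i) ^ 2) ≤ Real.sqrt ((2 * R) ^ 2) :=
        Real.sqrt_le_sqrt hball
      _ = 2 * R := by rw [Real.sqrt_sq (by linarith)]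
  have hballvol := Measure.addHaar_closedBall' volume (EuclideanSpace.single i0 (10 * R))
    (show (0:ℝ) ≤ 2 * R by linarith)
  rw [finrank_euclideanSpace_fin] at hballvol
  have hballfin : volume (Metric.closedBall (EuclideanSpace.single i0 (10 * R)) (2 * R)) < ⊤ :=
    measure_closedBall_lt_top
  have hUfin : volume U < ⊤ := lt_of_le_of_lt (measure_mono hsub) hballfin
  have hUvol : (volume U).toReal ≤ (2 * R) ^ d * κ := by
    have hle : volume U ≤ ENNReal.ofReal ((2 * R) ^ d)
        * volume (Metric.closedBall (0 : EuclideanSpace ℝ (Fin d)) 1) :=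
      le_trans (measure_mono hsub) (le_of_eq hballvol)
    have hne : ENNReal.ofReal ((2 * R) ^ d)
        * volume (Metric.closedBall (0 : EuclideanSpace ℝ (Fin d)) 1) ≠ ⊤ :=
      ENNReal.mul_ne_top ENNReal.ofReal_ne_top measure_closedBall_lt_top.ne
    calc (volume U).toReal
        ≤ (ENNReal.ofReal ((2 * R) ^ d)
            * volume (Metric.closedBall (0 : EuclideanSpace ℝ (Fin d)) 1)).toReal :=
          ENNReal.toReal_mono hne hle
      _ = (2 * R) ^ d * κ := by
          rw [ENNReal.toReal_mul, ENNReal.toReal_ofReal (by positivity), hκdef]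
  -- measure-preserving reflection
  have hmp : MeasurePreserving σ := σ.measurePreserving
  have hemb : MeasurableEmbedding σ := σ.toHomeomorph.measurableEmbedding
  have hUpre : σ ⁻¹' U = U := by
    ext z
    simp only [Set.mem_preimage, hUdef, galaxyCylinder, Set.mem_setOf_eq]
    have hc0 : σ z i0 = z i0 := by rw [hσapp, if_neg (Ne.symm hi01)]
    have hcsq : ∀ i, (σ z i) ^ 2 = (z i) ^ 2 := by
      intro i; rw [hσapp]; split <;> ring
    constructor
    · rintro ⟨ha, hb⟩
      refine ⟨by rwa [hc0] at ha, ?_⟩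
      calc ∑ i ∈ Finset.univ.filter (fun i : Fin d => i ≠ i0), (z i) ^ 2
          = ∑ i ∈ Finset.univ.filter (fun i : Fin d => i ≠ i0), (σ z i) ^ 2 :=
            Finset.sum_congr rfl fun i _ => (hcsq i).symm
        _ ≤ (η * R) ^ 2 := hb
    · rintro ⟨ha, hb⟩
      refine ⟨by rwa [hc0], ?_⟩
      calc ∑ i ∈ Finset.univ.filter (fun i : Fin d => i ≠ i0), (σ z i) ^ 2
          = ∑ i ∈ Finset.univ.filter (fun i : Fin d => i ≠ i0), (z i) ^ 2 :=
            Finset.sum_congr rfl fun i _ => hcsq i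
        _ ≤ (η * R) ^ 2 := hb
  -- f ∘ σ
  have hfσ : ∀ z : EuclideanSpace ℝ (Fin d), f (σ z) = (-(z i1) - M) / ‖z - y‖ ^ d := by
    intro z
    rw [hfz (σ z), hσapp, if_pos rfl,
      show σ z - x = σ (z - y) from by rw [map_sub, hydef, hσσ], σ.norm_map]
  -- integrability
  have hbnd : ∀ z ∈ U, |f z| ≤ 2 * R / (8 * R) ^ d := by
    intro z hz
    obtain ⟨hA8, hA14, hB8, hB14, hzi1, hAB⟩ := hfacts z hz
    rw [hfz, abs_div]
    have hApos : (0:ℝ) < ‖z - x‖ := lt_of_lt_of_le (by linarith) hA8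
    have h8d : (0:ℝ) < (8 * R) ^ d := by positivity
    have hnum : |z i1 - M| ≤ 2 * R := by
      have := abs_sub (z i1) M
      rw [abs_of_nonneg hM0] at this
      linarith
    have hden : (8 * R) ^ d ≤ |‖z - x‖ ^ d| := by
      rw [abs_of_pos (by positivity)]
      exact pow_le_pow_left₀ (by linarith) hA8 d
    exact div_le_div₀ (by linarith) hnum h8d hden
  have hbndσ : ∀ z ∈ U, |f (σ z)| ≤ 2 * R / (8 * R) ^ d := by
    intro z hz
    obtain ⟨hA8, hA14, hB8, hB14, hzi1, hAB⟩ := hfacts z hz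
    rw [hfσ, abs_div]
    have hBpos : (0:ℝ) < ‖z - y‖ := lt_of_lt_of_le (by linarith) hB8
    have h8d : (0:ℝ) < (8 * R) ^ d := by positivity
    have hnum : |-(z i1) - M| ≤ 2 * R := by
      have := abs_sub (-(z i1)) M
      rw [abs_of_nonneg hM0, abs_neg] at this
      linarith
    have hden : (8 * R) ^ d ≤ |‖z - y‖ ^ d| := by
      rw [abs_of_pos (by positivity)]
      exact pow_le_pow_left₀ (by linarith) hB8 d
    exact div_le_div₀ (by linarith) hnum h8d hden
  have hintf : IntegrableOn f U :=
    Measure.integrableOn_of_bounded hUfin.ne hfmeas.aestronglyMeasurable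
      ((ae_restrict_iff' hUmeas).2 (Filter.Eventually.of_forall fun z hz => by
        rw [Real.norm_eq_abs]; exact hbnd z hz))
  have hintfσ : IntegrableOn (fun z => f (σ z)) U :=
    Measure.integrableOn_of_bounded hUfin.ne
      (hfmeas.comp σ.continuous.measurable).aestronglyMeasurable
      ((ae_restrict_iff' hUmeas).2 (Filter.Eventually.of_forall fun z hz => by
        rw [Real.norm_eq_abs]; exact hbndσ z hz))
  -- change of variables
  have hswap : ∫ z in U, f z = ∫ z in U, f (σ z) := by
    rw [show (∫ z in U, f (σ z)) = ∫ z in σ ⁻¹' U, f (σ z) from by rw [hUpre]]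
    exact (hmp.setIntegral_preimage_emb hemb f U).symm
  -- pointwise pair bound
  have hpair : ∀ z ∈ U, |f z + f (σ z)| ≤ K * M / R ^ d := by
    intro z hz
    obtain ⟨hA8, hA14, hB8, hB14, hzi1, hAB⟩ := hfacts z hz
    rw [hfz, hfσ]
    set A := ‖z - x‖ with hAdef
    set B := ‖z - y‖ with hBdef
    have hApos : (0:ℝ) < A := lt_of_lt_of_le (by linarith) hA8
    have hBpos : (0:ℝ) < B := lt_of_lt_of_le (by linarith) hB8
    have hAd : (8 * R) ^ d ≤ A ^ d := pow_le_pow_left₀ (by linarith) hA8 d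
    have hBd : (8 * R) ^ d ≤ B ^ d := pow_le_pow_left₀ (by linarith) hB8 d
    have hAd' : A ^ d ≤ (14 * R) ^ d := pow_le_pow_left₀ (by linarith) hA14 d
    have hBd' : B ^ d ≤ (14 * R) ^ d := pow_le_pow_left₀ (by linarith) hB14 d
    have hApd : (0:ℝ) < A ^ d := by positivity
    have hBpd : (0:ℝ) < B ^ d := by positivity
    have heq : (z i1 - M) / A ^ d + (-(z i1) - M) / B ^ d
        = (z i1 * (B ^ d - A ^ d) - M * (B ^ d + A ^ d)) / (A ^ d * B ^ d) := by
      field_simp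
      ring
    rw [heq]
    have hpow : |B ^ d - A ^ d| ≤ d * (14 * R) ^ (d - 1) * (2 * M) := by
      calc |B ^ d - A ^ d| ≤ d * (14 * R) ^ (d - 1) * |B - A| :=
          my_abs_pow_sub_pow d (by linarith) (by linarith) hB14 hA14
        _ ≤ d * (14 * R) ^ (d - 1) * (2 * M) := by
            refine mul_le_mul_of_nonneg_left ?_ (by positivity)
            rw [abs_sub_comm]
            exact hAB
    have hnum : |z i1 * (B ^ d - A ^ d) - M * (B ^ d + A ^ d)|
        ≤ R * (d * (14 * R) ^ (d - 1) * (2 * M)) + M * (2 * (14 * R) ^ d) := by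
      calc |z i1 * (B ^ d - A ^ d) - M * (B ^ d + A ^ d)|
          ≤ |z i1 * (B ^ d - A ^ d)| + |M * (B ^ d + A ^ d)| := abs_sub _ _
        _ = |z i1| * |B ^ d - A ^ d| + M * (B ^ d + A ^ d) := by
            rw [abs_mul, abs_mul, abs_of_nonneg hM0, abs_of_nonneg (add_nonneg hBpd.le hApd.le)]
        _ ≤ R * (d * (14 * R) ^ (d - 1) * (2 * M)) + M * (2 * (14 * R) ^ d) := by
            apply add_le_add
            · exact mul_le_mul hzi1 hpow (abs_nonneg _) (by linarith)
            · exact mul_le_mul_of_nonneg_left (by linarith) hM0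
    have hfrac : |(z i1 * (B ^ d - A ^ d) - M * (B ^ d + A ^ d)) / (A ^ d * B ^ d)|
        ≤ (R * (d * (14 * R) ^ (d - 1) * (2 * M)) + M * (2 * (14 * R) ^ d))
          / ((8 * R) ^ d * (8 * R) ^ d) := by
      rw [abs_div, abs_of_pos (mul_pos hApd hBpd)]
      exact div_le_div₀ (by positivity) hnum (by positivity)
        (mul_le_mul hAd hBd (by positivity) (le_of_lt hApd))
    refine le_trans hfrac (le_of_eq ?_)
    obtain ⟨e, he⟩ : ∃ e, d = e + 1 := ⟨d - 1, by omega⟩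
    subst he
    rw [hKdef]
    simp only [Nat.add_sub_cancel, mul_pow]
    push_cast
    field_simp
    ring
  -- assembling
  have hsum_int : ∫ z in U, (f z + f (σ z)) = (∫ z in U, f z) + ∫ z in U, f (σ z) :=
    integral_add hintf hintfσ
  have hnorm_bound : |∫ z in U, (f z + f (σ z))| ≤ (K * M / R ^ d) * (volume U).toReal := by
    have h := norm_setIntegral_le_of_norm_le_const (μ := volume) (s := U)
        (f := fun z => f z + f (σ z)) (C := K * M / R ^ d) hUfin ?_
    · rw [Real.norm_eq_abs] at h; exact h
    · intro z hz
      rw [Real.norm_eq_abs]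
      exact hpair z hz
  have h2I : |∫ z in U, f z| * 2 ≤ (K * M / R ^ d) * ((2 * R) ^ d * κ) := by
    have e1 : |2 * ∫ z in U, f z| ≤ (K * M / R ^ d) * (volume U).toReal := by
      rw [show (2 : ℝ) * ∫ z in U, f z = (∫ z in U, f z) + ∫ z in U, f (σ z) from by
        rw [← hswap]; ring, ← hsum_int]
      exact hnorm_bound
    rw [abs_mul, abs_two] at e1
    have hKM : 0 ≤ K * M / R ^ d := by positivity
    calc |∫ z in U, f z| * 2 = 2 * |∫ z in U, f z| := by ring
      _ ≤ (K * M / R ^ d) * (volume U).toReal := e1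
      _ ≤ (K * M / R ^ d) * ((2 * R) ^ d * κ) := mul_le_mul_of_nonneg_left hUvol hKM
  have hrr : (K * M / R ^ d) * ((2 * R) ^ d * κ) = 2 ^ d * K * κ * M := by
    rw [mul_pow]
    field_simp
  rw [hrr] at h2I
  have habs : 0 ≤ |∫ z in U, f z| := abs_nonneg _
  have hexp : (2 ^ d * K * κ + 1) * M = 2 ^ d * K * κ * M + M := by ring
  rw [hexp]
  linarith
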